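/- With the data E₀, E₁, π₀, π₁, U, T₀, T₁, N₀, N₁ and V(T₀,T₁) as in the context, and assuming π₀(N₀) ⊆ T₀ and π₁(N₁) ⊆ T₁: the double Ω-orthogonal satisfies ( V(T₀,T₁)^⊥ )^⊥ = V(T₀,T₁). -/

import Mathlib

open MeasureTheory Set

/-- An element of `W(E)`: a pair `(λ, φ)` of continuous maps on `[0,1]` with values in `E`
and in the dual `E* = E →L[ℝ] ℝ` respectively. -/
structure WPair (E : Type*) [NormedAddCommGroup E] [NormedSpace ℝ E] where
  lam : ℝ → E
  phi : ℝ → E →L[ℝ] ℝ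
  lam_cont : ContinuousOn lam (Icc 0 1)
  phi_cont : ContinuousOn phi (Icc 0 1)

/-- The alternating bilinear form `Ω((λ,φ),(λ',φ')) = ∫₀¹ (φ(u)(λ'(u)) − φ'(u)(λ(u))) du`. -/
noncomputable def Omega {E : Type*} [NormedAddCommGroup E] [NormedSpace ℝ E]
    (w w' : WPair E) : ℝ :=
  ∫ u in (0:ℝ)..(1:ℝ), (w.phi u (w'.lam u) - w'.phi u (w.lam u))

/-- The `Ω`-orthogonal of a subset of `W(E)`. -/
def orth {E : Type*} [NormedAddCommGroup E] [NormedSpace ℝ E] (A : Set (WPair E)) :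
    Set (WPair E) :=
  {w | ∀ a ∈ A, Omega a w = 0}

/-- The annihilator `N = { α ∈ E* : α vanishes on T }` of a subspace `T ⊆ E`. -/
def Ann {E : Type*} [NormedAddCommGroup E] [NormedSpace ℝ E] (T : Submodule ℝ E) :
    Set (E →L[ℝ] ℝ) :=
  {α | ∀ v ∈ T, α v = 0}

/-- The space `V(T₀,T₁)` of solutions `(λ,φ)` of `λ(u) = λ(0) − π₀ ∫₀ᵘ φ` with boundary
conditions `λ(0) ∈ T₀` and `U⁻¹(λ(1)) ∈ T₁`. -/
noncomputable def VSet {E₀ E₁ : Type*}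
    [NormedAddCommGroup E₀] [NormedSpace ℝ E₀]
    [NormedAddCommGroup E₁] [NormedSpace ℝ E₁]
    (π₀ : (E₀ →L[ℝ] ℝ) →ₗ[ℝ] E₀) (U : E₁ ≃L[ℝ] E₀)
    (T₀ : Submodule ℝ E₀) (T₁ : Submodule ℝ E₁) : Set (WPair E₀) :=
  {w | (∀ u ∈ Icc (0:ℝ) 1, w.lam u = w.lam 0 - π₀ (∫ s in (0:ℝ)..u, w.phi s)) ∧
       w.lam 0 ∈ T₀ ∧ U.symm (w.lam 1) ∈ T₁}


set_option linter.unusedSectionVars false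
set_option maxHeartbeats 1000000

lemma Omega_antisymm {E : Type*} [NormedAddCommGroup E] [NormedSpace ℝ E]
    (w w' : WPair E) : Omega w w' = - Omega w' w := by
  rw [Omega, Omega, ← intervalIntegral.integral_neg]
  congr 1
  funext u
  ring

section Helpers

variable {E : Type*} [NormedAddCommGroup E] [NormedSpace ℝ E]

def clamp {β : Type*} (f : ℝ → β) : ℝ → β := fun u => f (min 1 (max 0 u))
lemma clamp_eqOn {β : Type*} (f : ℝ → β) : EqOn (clamp f) f (Icc 0 1) := fun u hu => by
  simp only [clamp, max_eq_right hu.1, min_eq_right hu.2]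
lemma clamp_continuous {β : Type*} [TopologicalSpace β] {f : ℝ → β}
    (hf : ContinuousOn f (Icc 0 1)) : Continuous (clamp f) := by
  apply hf.comp_continuous (by fun_prop)
  intro x
  exact ⟨le_min zero_le_one (le_max_left _ _), min_le_left _ _⟩

variable [FiniteDimensional ℝ E]

lemma hasDerivAt_prim {φ : ℝ → E →L[ℝ] ℝ} (hφ : Continuous φ) (x : ℝ) :
    HasDerivAt (fun u => ∫ s in (0:ℝ)..u, φ s) (φ x) x :=
  intervalIntegral.integral_hasDerivAt_right (hφ.intervalIntegrable 0 x)
    (hφ.stronglyMeasurableAtFilter _ _) hφ.continuousAt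

lemma continuous_prim {φ : ℝ → E →L[ℝ] ℝ} (hφ : Continuous φ) :
    Continuous (fun u => ∫ s in (0:ℝ)..u, φ s) :=
  continuous_iff_continuousAt.2 fun x => (hasDerivAt_prim hφ x).continuousAt

lemma integral_apply' {φ : ℝ → E →L[ℝ] ℝ} (hφ : Continuous φ) (v : E) :
    (∫ u in (0:ℝ)..1, φ u v) = (∫ u in (0:ℝ)..1, φ u) v := by
  have := (ContinuousLinearMap.apply ℝ ℝ v).intervalIntegral_comp_comm
    (hφ.intervalIntegrable (μ := volume) 0 1)
  simpa using this

lemma parts (π' : (E →L[ℝ] ℝ) →L[ℝ] E) {φ ψ : ℝ → E →L[ℝ] ℝ}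
    (hφ : Continuous φ) (hψ : Continuous ψ) :
    (∫ u in (0:ℝ)..1, ψ u (π' (∫ s in (0:ℝ)..u, φ s)))
      + (∫ u in (0:ℝ)..1, (∫ s in (0:ℝ)..u, ψ s) (π' (φ u)))
    = (∫ s in (0:ℝ)..1, ψ s) (π' (∫ s in (0:ℝ)..1, φ s)) := by
  set F := fun u => ∫ s in (0:ℝ)..u, φ s with hF
  set G := fun u => ∫ s in (0:ℝ)..u, ψ s with hG
  have hFc : Continuous F := continuous_prim hφ
  have hGc : Continuous G := continuous_prim hψ
  have hc1 : Continuous fun u => ψ u (π' (F u)) := hψ.clm_apply (π'.continuous.comp hFc)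
  have hc2 : Continuous fun u => G u (π' (φ u)) := hGc.clm_apply (π'.continuous.comp hφ)
  have key : ∀ x ∈ uIcc (0:ℝ) 1, HasDerivAt (fun u => G u (π' (F u)))
      (ψ x (π' (F x)) + G x (π' (φ x))) x := fun x _ =>
    (hasDerivAt_prim hψ x).clm_apply (π'.hasFDerivAt.comp_hasDerivAt x (hasDerivAt_prim hφ x))
  have h := intervalIntegral.integral_eq_sub_of_hasDerivAt key
    ((hc1.add hc2).intervalIntegrable 0 1)
  rw [intervalIntegral.integral_add (hc1.intervalIntegrable 0 1) (hc2.intervalIntegrable 0 1)] at h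
  have hG0 : G 0 = 0 := intervalIntegral.integral_same
  rw [h, hG0]
  simp
  rfl

/-- Core integral identity for globally continuous data. -/
lemma core (π' : (E →L[ℝ] ℝ) →L[ℝ] E) (hskew : ∀ α β : E →L[ℝ] ℝ, α (π' β) = - β (π' α))
    {φ ψ : ℝ → E →L[ℝ] ℝ} (hφ : Continuous φ) (hψ : Continuous ψ) (a b : E) :
    (∫ u in (0:ℝ)..1,
        (φ u (b - π' (∫ s in (0:ℝ)..u, ψ s)) - ψ u (a - π' (∫ s in (0:ℝ)..u, φ s))))
    = (∫ u in (0:ℝ)..1, φ u) (b - π' (∫ u in (0:ℝ)..1, ψ u))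
        - (∫ u in (0:ℝ)..1, ψ u) a := by
  set F := fun u => ∫ s in (0:ℝ)..u, φ s with hF
  set G := fun u => ∫ s in (0:ℝ)..u, ψ s with hG
  have hFc : Continuous F := continuous_prim hφ
  have hGc : Continuous G := continuous_prim hψ
  have heq : (fun u => φ u (b - π' (G u)) - ψ u (a - π' (F u)))
      = fun u => (φ u b - ψ u a) + (ψ u (π' (F u)) + G u (π' (φ u))) := by
    funext u
    rw [map_sub, map_sub, hskew (φ u) (G u)]
    ring
  have hcb : Continuous fun u => φ u b := hφ.clm_apply continuous_const
  have hca : Continuous fun u => ψ u a := hψ.clm_apply continuous_const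
  have hc1 : Continuous fun u => ψ u (π' (F u)) := hψ.clm_apply (π'.continuous.comp hFc)
  have hc2 : Continuous fun u => G u (π' (φ u)) := hGc.clm_apply (π'.continuous.comp hφ)
  rw [heq, intervalIntegral.integral_add (f := fun u => φ u b - ψ u a)
      (g := fun u => ψ u (π' (F u)) + G u (π' (φ u))) ((hcb.sub hca).intervalIntegrable 0 1)
      ((hc1.add hc2).intervalIntegrable 0 1),
    intervalIntegral.integral_sub (hcb.intervalIntegrable 0 1) (hca.intervalIntegrable 0 1),
    intervalIntegral.integral_add (hc1.intervalIntegrable 0 1) (hc2.intervalIntegrable 0 1),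
    integral_apply' hφ b, integral_apply' hψ a, parts π' hφ hψ]
  rw [map_sub, hskew (∫ u in (0:ℝ)..1, φ u) (∫ u in (0:ℝ)..1, ψ u)]
  ring

/-- Condition (i): `λ(u) = λ(0) − π'(∫₀ᵘ φ)`. -/
def CondI (π' : (E →L[ℝ] ℝ) →L[ℝ] E) (w : WPair E) : Prop :=
  ∀ u ∈ Icc (0:ℝ) 1, w.lam u = w.lam 0 - π' (∫ s in (0:ℝ)..u, w.phi s)

lemma prim_congr_clamp (w : WPair E) :
    ∀ u ∈ Icc (0:ℝ) 1,
      (∫ s in (0:ℝ)..u, w.phi s) = ∫ s in (0:ℝ)..u, clamp w.phi s := by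
  intro u hu
  apply intervalIntegral.integral_congr
  intro s hs
  rw [uIcc_of_le hu.1] at hs
  exact ((clamp_eqOn w.phi) ⟨hs.1, le_trans hs.2 hu.2⟩).symm

lemma Omega_formula (π' : (E →L[ℝ] ℝ) →L[ℝ] E)
    (hskew : ∀ α β : E →L[ℝ] ℝ, α (π' β) = - β (π' α))
    (v w : WPair E) (hv : CondI π' v) (hw : CondI π' w) :
    Omega v w = (∫ u in (0:ℝ)..1, v.phi u) (w.lam 1)
      - (∫ u in (0:ℝ)..1, w.phi u) (v.lam 0) := by
  set φ := clamp v.phi with hφd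
  set ψ := clamp w.phi with hψd
  have hφ : Continuous φ := clamp_continuous v.phi_cont
  have hψ : Continuous ψ := clamp_continuous w.phi_cont
  have h01 : (1:ℝ) ∈ Icc (0:ℝ) 1 := ⟨zero_le_one, le_refl 1⟩
  have heq : EqOn (fun u => v.phi u (w.lam u) - w.phi u (v.lam u))
      (fun u => φ u (w.lam 0 - π' (∫ s in (0:ℝ)..u, ψ s))
        - ψ u (v.lam 0 - π' (∫ s in (0:ℝ)..u, φ s))) (uIcc 0 1) := by
    rw [uIcc_of_le zero_le_one]
    intro u hu
    simp only
    rw [← clamp_eqOn v.phi hu, ← clamp_eqOn w.phi hu, ← prim_congr_clamp w u hu,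
      ← prim_congr_clamp v u hu, ← hv u hu, ← hw u hu]
  rw [Omega, intervalIntegral.integral_congr heq, core π' hskew hφ hψ (v.lam 0) (w.lam 0),
    ← prim_congr_clamp v 1 h01, ← prim_congr_clamp w 1 h01, ← hw 1 h01]

lemma Omega_test (π' : (E →L[ℝ] ℝ) →L[ℝ] E)
    (hskew : ∀ α β : E →L[ℝ] ℝ, α (π' β) = - β (π' α))
    {ψ : ℝ → E →L[ℝ] ℝ} (hψ : Continuous ψ)
    (hψ0 : (∫ u in (0:ℝ)..1, ψ u) = 0) (w z : WPair E)
    (hwlam : ∀ u, w.lam u = -π' (∫ s in (0:ℝ)..u, ψ s)) (hwphi : w.phi = ψ) :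
    Omega w z = ∫ u in (0:ℝ)..1,
      ψ u (clamp z.lam u + π' (∫ s in (0:ℝ)..u, clamp z.phi s)) := by
  set χ := clamp z.phi with hχd
  have hχ : Continuous χ := clamp_continuous z.phi_cont
  set lz := clamp z.lam with hlzd
  have hlz : Continuous lz := clamp_continuous z.lam_cont
  have heq : EqOn (fun u => w.phi u (z.lam u) - z.phi u (w.lam u))
      (fun u => ψ u (lz u) + χ u (π' (∫ s in (0:ℝ)..u, ψ s))) (uIcc 0 1) := by
    rw [uIcc_of_le zero_le_one]
    intro u hu
    simp only
    rw [hwphi, hwlam u, ← clamp_eqOn z.lam hu, ← clamp_eqOn z.phi hu, map_neg, ← sub_neg_eq_add]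
  have hc1 : Continuous fun u => ψ u (lz u) := hψ.clm_apply hlz
  have hc2 : Continuous fun u => χ u (π' (∫ s in (0:ℝ)..u, ψ s)) :=
    hχ.clm_apply (π'.continuous.comp (continuous_prim hψ))
  have hc3 : Continuous fun u => ψ u (π' (∫ s in (0:ℝ)..u, χ s)) :=
    hψ.clm_apply (π'.continuous.comp (continuous_prim hχ))
  have h2 : (∫ u in (0:ℝ)..1, (∫ s in (0:ℝ)..u, χ s) (π' (ψ u)))
      = - ∫ u in (0:ℝ)..1, ψ u (π' (∫ s in (0:ℝ)..u, χ s)) := by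
    rw [← intervalIntegral.integral_neg]
    congr 1
    funext u
    exact hskew _ _
  have hparts := parts π' hψ hχ
  rw [hψ0, map_zero, map_zero, h2] at hparts
  have hkey : (∫ u in (0:ℝ)..1, χ u (π' (∫ s in (0:ℝ)..u, ψ s)))
      = ∫ u in (0:ℝ)..1, ψ u (π' (∫ s in (0:ℝ)..u, χ s)) := by linarith
  rw [Omega, intervalIntegral.integral_congr heq,
    intervalIntegral.integral_add (hc1.intervalIntegrable 0 1) (hc2.intervalIntegrable 0 1),
    hkey, ← intervalIntegral.integral_add (hc1.intervalIntegrable 0 1)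
      (hc3.intervalIntegrable 0 1)]
  congr 1
  funext u
  rw [map_add]



lemma eq_zero_of_integral_eq_zero {f : ℝ → ℝ} (hf : Continuous f) (h0 : ∀ x, 0 ≤ f x)
    (hI : (∫ u in (0:ℝ)..1, f u) = 0) : ∀ u ∈ Icc (0:ℝ) 1, f u = 0 := by
  by_contra h
  push_neg at h
  obtain ⟨u, hu, hne⟩ := h
  have hupos : 0 < f u := lt_of_le_of_ne (h0 u) (Ne.symm hne)
  have hopen : IsOpen (f ⁻¹' Ioi 0) := isOpen_Ioi.preimage hf
  have hclos : u ∈ closure (Ioo (0:ℝ) 1) := by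
    rwa [closure_Ioo (by norm_num : (0:ℝ) ≠ 1)]
  obtain ⟨x₀, hx₀o, hx₀i⟩ := mem_closure_iff.1 hclos _ hopen hupos
  have hUopen : IsOpen (f ⁻¹' Ioi 0 ∩ Ioo 0 1) := hopen.inter isOpen_Ioo
  obtain ⟨l, r, hlr, hsub⟩ := mem_nhds_iff_exists_Ioo_subset.1
    (hUopen.mem_nhds ⟨hx₀o, hx₀i⟩)
  have hpos : 0 < ∫ x in (0:ℝ)..1, f x := by
    rw [intervalIntegral.integral_pos_iff_support_of_nonneg_ae
      (Filter.Eventually.of_forall h0) (hf.intervalIntegrable 0 1)]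
    refine ⟨zero_lt_one, lt_of_lt_of_le (b := volume (Ioo l r)) ?_ (measure_mono ?_)⟩
    · rw [Real.volume_Ioo]
      simp only [ENNReal.ofReal_pos, sub_pos]
      exact lt_trans hlr.1 hlr.2
    · intro x hx
      obtain ⟨hxo, hxi⟩ := hsub hx
      exact ⟨ne_of_gt hxo, hxi.1, le_of_lt hxi.2⟩
  exact absurd hI (ne_of_gt hpos)

lemma const_of_test {h : ℝ → E} (hh : Continuous h)
    (ht : ∀ ψ : ℝ → E →L[ℝ] ℝ, Continuous ψ → (∫ u in (0:ℝ)..1, ψ u) = 0 →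
      (∫ u in (0:ℝ)..1, ψ u (h u)) = 0) :
    ∀ u ∈ Icc (0:ℝ) 1, h u = h 0 := by
  intro u hu
  rw [← sub_eq_zero, ← Module.forall_dual_apply_eq_zero_iff ℝ (h u - h 0)]
  intro ℓ
  set α := LinearMap.toContinuousLinearMap ℓ with hα
  set g : ℝ → ℝ := fun t => α (h t) with hg
  have hgc : Continuous g := α.continuous.comp hh
  set m : ℝ := ∫ t in (0:ℝ)..1, g t with hm
  have hψc : Continuous (fun t => (g t - m) • α) := (hgc.sub continuous_const).smul continuous_const
  have hgm : (∫ t in (0:ℝ)..1, (g t - m)) = 0 := by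
    rw [intervalIntegral.integral_sub (hgc.intervalIntegrable 0 1) intervalIntegrable_const]
    simp [hm]
  have hψ0 : (∫ t in (0:ℝ)..1, (g t - m) • α) = 0 := by
    rw [intervalIntegral.integral_smul_const, hgm, zero_smul]
  have h1 : (∫ t in (0:ℝ)..1, (g t - m) * g t) = 0 := by
    have := ht _ hψc hψ0
    simpa [smul_eq_mul] using this
  have h3 : (∫ t in (0:ℝ)..1, (g t - m) ^ 2) = 0 := by
    have h2 : (∫ t in (0:ℝ)..1, (g t - m) * m) = 0 := by
      rw [intervalIntegral.integral_mul_const, hgm, zero_mul]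
    have heq : ∀ t : ℝ, (g t - m) ^ 2 = (g t - m) * g t - (g t - m) * m := fun t => by ring
    simp_rw [heq]
    rw [intervalIntegral.integral_sub (f := fun t => (g t - m) * g t) (g := fun t => (g t - m) * m)
      ((((hgc.sub continuous_const).mul hgc)).intervalIntegrable 0 1)
      (((hgc.sub continuous_const).mul continuous_const).intervalIntegrable 0 1), h1, h2, sub_zero]
  have hz := eq_zero_of_integral_eq_zero (by fun_prop) (fun x => sq_nonneg _) h3
  have hgu : g u = m := by
    have := hz u hu
    have := (pow_eq_zero_iff two_ne_zero).1 this
    linarith [sub_eq_zero.1 this]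
  have hg0 : g 0 = m := by
    have := hz 0 (by constructor <;> norm_num)
    have := (pow_eq_zero_iff two_ne_zero).1 this
    linarith [sub_eq_zero.1 this]
  have : α (h u - h 0) = 0 := by rw [map_sub]; rw [hg] at hgu hg0; linarith
  rw [hα] at this
  rwa [LinearMap.coe_toContinuousLinearMap'] at this


lemma mem_of_pairing {E : Type*} [NormedAddCommGroup E] [NormedSpace ℝ E]
    [FiniteDimensional ℝ E]
    (S : Submodule ℝ (E × (E →L[ℝ] ℝ))) (x : E × (E →L[ℝ] ℝ))
    (hx : ∀ (d : E →L[ℝ] ℝ) (b : E),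
      (∀ s ∈ S, d s.1 - s.2 b = 0) → d x.1 - x.2 b = 0) :
    x ∈ S := by
  rw [← Subspace.dualAnnihilator_dualCoannihilator_eq (W := S), Submodule.mem_dualCoannihilator]
  intro g hg
  rw [Submodule.mem_dualAnnihilator] at hg
  set d : E →L[ℝ] ℝ :=
    LinearMap.toContinuousLinearMap (g ∘ₗ LinearMap.inl ℝ E (E →L[ℝ] ℝ)) with hd
  set ξ : Module.Dual ℝ (Module.Dual ℝ E) :=
    (-(g ∘ₗ LinearMap.inr ℝ E (E →L[ℝ] ℝ))) ∘ₗ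
      (LinearMap.toContinuousLinearMap :
        (E →ₗ[ℝ] ℝ) ≃ₗ[ℝ] (E →L[ℝ] ℝ)).toLinearMap with hξ
  set b : E := (Module.evalEquiv ℝ E).symm ξ with hb
  have hbval : ∀ c : E →L[ℝ] ℝ, c b = - g (0, c) := by
    intro c
    have h1 : (Module.evalEquiv ℝ E) b = ξ := (Module.evalEquiv ℝ E).apply_symm_apply ξ
    have h2 := congrFun (congrArg (fun (f : Module.Dual ℝ (Module.Dual ℝ E)) => ⇑f) h1)
      (c : E →ₗ[ℝ] ℝ)
    simp only [Module.evalEquiv_apply, Module.Dual.eval_apply] at h2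
    have h3 : (LinearMap.toContinuousLinearMap ((c : E →ₗ[ℝ] ℝ))) = c := by
      ext v
      simp [LinearMap.coe_toContinuousLinearMap']
    rw [hξ] at h2
    simpa [h3] using h2
  have hgform : ∀ p : E × (E →L[ℝ] ℝ), g p = d p.1 - p.2 b := by
    intro p
    have hsplit : g p = g (p.1, 0) + g (0, p.2) := by
      rw [← map_add]
      congr 1
      simp
    have hd1 : d p.1 = g (p.1, 0) := by
      have := congrFun (LinearMap.coe_toContinuousLinearMap'
        (g ∘ₗ LinearMap.inl ℝ E (E →L[ℝ] ℝ))) p.1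
      simpa [hd] using this
    have hb2 := hbval p.2
    rw [hsplit, hd1]
    linarith
  rw [hgform x]
  exact hx d b (fun s hs => by rw [← hgform s]; exact hg s hs)

end Helpers

theorem double_orth_VSet
    (E₀ E₁ : Type*)
    [NormedAddCommGroup E₀] [NormedSpace ℝ E₀] [FiniteDimensional ℝ E₀]
    [NormedAddCommGroup E₁] [NormedSpace ℝ E₁] [FiniteDimensional ℝ E₁]
    (π₀ : (E₀ →L[ℝ] ℝ) →ₗ[ℝ] E₀) (π₁ : (E₁ →L[ℝ] ℝ) →ₗ[ℝ] E₁)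
    (hskew₀ : ∀ α β : E₀ →L[ℝ] ℝ, α (π₀ β) = - β (π₀ α))
    (hskew₁ : ∀ α β : E₁ →L[ℝ] ℝ, α (π₁ β) = - β (π₁ α))
    (U : E₁ ≃L[ℝ] E₀)
    (hU : ∀ α : E₀ →L[ℝ] ℝ, U (π₁ (α.comp (U : E₁ →L[ℝ] E₀))) = π₀ α)
    (T₀ : Submodule ℝ E₀) (T₁ : Submodule ℝ E₁)
    (hT₀ : ∀ α ∈ Ann T₀, π₀ α ∈ T₀) (hT₁ : ∀ α ∈ Ann T₁, π₁ α ∈ T₁) :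
    orth (orth (VSet π₀ U T₀ T₁)) = VSet π₀ U T₀ T₁ := by
  classical
  set π' : (E₀ →L[ℝ] ℝ) →L[ℝ] E₀ := LinearMap.toContinuousLinearMap π₀ with hπ'
  have hπeq : ∀ c, π' c = π₀ c := fun c => by
    rw [hπ']
    exact congrFun (LinearMap.coe_toContinuousLinearMap' π₀) c
  have hskew' : ∀ α β : E₀ →L[ℝ] ℝ, α (π' β) = - β (π' α) := by
    intro α β
    rw [hπeq, hπeq]
    exact hskew₀ α β
  have hVcond : ∀ v ∈ VSet π₀ U T₀ T₁, CondI π' v := by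
    intro v hv u hu
    rw [hπeq]
    exact hv.1 u hu
  have h1mem : (1:ℝ) ∈ Icc (0:ℝ) 1 := ⟨zero_le_one, le_refl 1⟩
  apply Set.Subset.antisymm
  · -- hard inclusion
    intro z hz
    -- Step 1 : z satisfies the evolution equation
    have hstep1 : CondI π' z := by
      have hcont : Continuous
          (fun t => clamp z.lam t + π' (∫ s in (0:ℝ)..t, clamp z.phi s)) :=
        (clamp_continuous z.lam_cont).add
          (π'.continuous.comp (continuous_prim (clamp_continuous z.phi_cont)))
      have key := const_of_test hcont ?_
      · intro u hu
        have k := key u hu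
        have k0 : clamp z.lam 0 + π' (∫ s in (0:ℝ)..0, clamp z.phi s) = z.lam 0 := by
          rw [intervalIntegral.integral_same, map_zero, add_zero,
            clamp_eqOn z.lam (by exact ⟨le_refl 0, zero_le_one⟩)]
        rw [clamp_eqOn z.lam hu, ← prim_congr_clamp z u hu, k0] at k
        exact eq_sub_of_add_eq k
      · intro ψ hψ hψ0
        set w : WPair E₀ := ⟨fun u => -π' (∫ s in (0:ℝ)..u, ψ s), ψ,
          ((π'.continuous.comp (continuous_prim hψ)).neg).continuousOn,
          hψ.continuousOn⟩ with hwdef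
        have hcw : CondI π' w := by
          intro u hu
          show -π' (∫ s in (0:ℝ)..u, ψ s)
            = -π' (∫ s in (0:ℝ)..(0:ℝ), ψ s) - π' (∫ s in (0:ℝ)..u, ψ s)
          rw [intervalIntegral.integral_same, map_zero, neg_zero, zero_sub]
        have hworth : w ∈ orth (VSet π₀ U T₀ T₁) := by
          intro v hv
          rw [Omega_formula π' hskew' v w (hVcond v hv) hcw]
          have hl1 : w.lam 1 = 0 := by
            show -π' (∫ s in (0:ℝ)..1, ψ s) = 0
            rw [hψ0, map_zero, neg_zero]
          have hp : (∫ u in (0:ℝ)..1, w.phi u) = 0 := hψ0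
          rw [hl1, hp]
          simp
        have h0 := hz w hworth
        rwa [Omega_test π' hskew' hψ hψ0 w z (fun u => rfl) rfl] at h0
    have hz1 : z.lam 1 = z.lam 0 - π' (∫ u in (0:ℝ)..1, z.phi u) := hstep1 1 h1mem
    -- Step 2 : boundary conditions via duality
    set T₁' : Submodule ℝ E₀ := T₁.map (U.toLinearEquiv : E₁ →ₗ[ℝ] E₀) with hT₁'def
    have hT₁' : ∀ y : E₀, y ∈ T₁' ↔ U.symm y ∈ T₁ := by
      intro y
      constructor
      · rintro ⟨t, ht, rfl⟩
        simpa using ht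
      · intro hy
        exact ⟨U.symm y, hy, by simp⟩
    set S : Submodule ℝ (E₀ × (E₀ →L[ℝ] ℝ)) :=
      (T₀.comap (LinearMap.fst ℝ E₀ (E₀ →L[ℝ] ℝ))) ⊓
      (T₁'.comap ((LinearMap.fst ℝ E₀ (E₀ →L[ℝ] ℝ))
        - π₀ ∘ₗ (LinearMap.snd ℝ E₀ (E₀ →L[ℝ] ℝ)))) with hSdef
    have hSmem : ∀ p : E₀ × (E₀ →L[ℝ] ℝ), p ∈ S ↔ p.1 ∈ T₀ ∧ p.1 - π₀ p.2 ∈ T₁' := by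
      intro p
      rw [hSdef]
      simp [Submodule.mem_inf, Submodule.mem_comap, LinearMap.sub_apply]
    have hmem : ((z.lam 0, ∫ u in (0:ℝ)..1, z.phi u) : E₀ × (E₀ →L[ℝ] ℝ)) ∈ S := by
      apply mem_of_pairing
      intro d b hdb
      set w : WPair E₀ := ⟨fun u => (b + π' d) - u • π' d, fun _ => d,
        (continuous_const.sub (continuous_id.smul continuous_const)).continuousOn,
        continuous_const.continuousOn⟩ with hwdef
      have hcw : CondI π' w := by
        intro u hu
        show (b + π' d) - u • π' d
          = ((b + π' d) - (0:ℝ) • π' d) - π' (∫ s in (0:ℝ)..u, d)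
        rw [intervalIntegral.integral_const]
        simp
      have hwp : (∫ u in (0:ℝ)..1, w.phi u) = d := by
        show (∫ u in (0:ℝ)..1, d) = d
        rw [intervalIntegral.integral_const]
        simp
      have hworth : w ∈ orth (VSet π₀ U T₀ T₁) := by
        intro v hv
        rw [Omega_formula π' hskew' v w (hVcond v hv) hcw, hwp]
        have hwl : w.lam 1 = b := by
          show (b + π' d) - (1:ℝ) • π' d = b
          simp
        rw [hwl]
        have hs : ((v.lam 0, ∫ u in (0:ℝ)..1, v.phi u) : E₀ × (E₀ →L[ℝ] ℝ)) ∈ S := by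
          rw [hSmem]
          refine ⟨hv.2.1, ?_⟩
          simp only
          rw [hT₁', ← hv.1 1 h1mem]
          exact hv.2.2
        have hdv := hdb _ hs
        simp only at hdv
        linarith
      have h0 := hz w hworth
      rw [Omega_formula π' hskew' w z hcw hstep1, hwp] at h0
      have hwl0 : w.lam 0 = b + π' d := by
        show (b + π' d) - (0:ℝ) • π' d = b + π' d
        simp
      rw [hwl0, hz1] at h0
      have hsk := hskew' (∫ u in (0:ℝ)..1, z.phi u) d
      simp only [map_sub, map_add] at h0 ⊢
      linarith
    rw [hSmem] at hmem
    obtain ⟨hm0, hm1⟩ := hmem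
    simp only at hm0 hm1
    refine ⟨?_, hm0, ?_⟩
    · intro u hu
      rw [← hπeq]
      exact hstep1 u hu
    · rw [← hT₁' (z.lam 1)]
      rw [hz1, hπeq]
      exact hm1
  · -- easy inclusion
    intro v hv a ha
    rw [Omega_antisymm a v, ha v hv, neg_zero]
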